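/- Let G be a finite group with subgroups A, B, M satisfying conditions (1)–(4) of the soft plane construction. Then AM ∩ BM = M. -/

import Mathlib

open scoped Pointwise

/-- Under conditions (1)–(4), `AM ∩ BM = M`. -/
theorem stmt6 {G : Type*} [Group G] [Finite G]
    (A B M AM BM : Subgroup G) (n k : ℕ) (hn : 1 < n)
    (hk : k = Nat.card (A ⊓ B : Subgroup G))
    (hA : Nat.card A = n * k) (hB : Nat.card B = n * k) (hM : Nat.card M = n * k)
    (hG : Nat.card G = n ^ 3 * k)
    (hAM : (AM : Set G) = (A : Set G) * (M : Set G))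
    (hBM : (BM : Set G) = (B : Set G) * (M : Set G))
    (hAMcard : Nat.card AM = n ^ 2 * k) (hBMcard : Nat.card BM = n ^ 2 * k)
    (h3 : ∀ g : G, ∃ a ∈ A, ∃ m ∈ M, ∃ b ∈ B, g = a * m * b)
    (h4 : ((A : Set G) * (B : Set G)) ∩ ((B : Set G) * (A : Set G)) =
      (A : Set G) ∪ (B : Set G)) :
    AM ⊓ BM = M := by
  have hk0 : 0 < k := hk ▸ Nat.card_pos
  have hn0 : 0 < n := by omega
  -- M ≤ AM and M ≤ BM
  have hMAM : M ≤ AM := by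
    intro x hx
    have : x ∈ (AM : Set G) := by
      rw [hAM]
      exact ⟨1, one_mem A, x, hx, one_mul x⟩
    exact this
  have hMBM : M ≤ BM := by
    intro x hx
    have : x ∈ (BM : Set G) := by
      rw [hBM]
      exact ⟨1, one_mem B, x, hx, one_mul x⟩
    exact this
  have hMle : M ≤ AM ⊓ BM := le_inf hMAM hMBM
  -- choose decompositions g = a g * m g * b g
  choose a ha m hm b hb hg using h3
  -- injection (AM ⊓ BM) × G → AM × BM
  have hamAM : ∀ g : G, a g * m g ∈ AM := by
    intro g
    have : a g * m g ∈ (AM : Set G) := by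
      rw [hAM]
      exact ⟨a g, ha g, m g, hm g, rfl⟩
    exact this
  have hbBM : ∀ g : G, b g ∈ BM := by
    intro g
    have : b g ∈ (BM : Set G) := by
      rw [hBM]
      exact ⟨b g, hb g, 1, one_mem M, mul_one _⟩
    exact this
  let f : (AM ⊓ BM : Subgroup G) × G → AM × BM := fun p =>
    (⟨a p.2 * m p.2 * p.1.1, mul_mem (hamAM p.2) p.1.2.1⟩,
     ⟨(p.1.1)⁻¹ * b p.2, mul_mem (inv_mem p.1.2.2) (hbBM p.2)⟩)
  have hinj : Function.Injective f := by
    rintro ⟨⟨z, hz⟩, g⟩ ⟨⟨z', hz'⟩, g'⟩ hfeq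
    simp only [f, Prod.mk.injEq, Subtype.mk.injEq] at hfeq
    obtain ⟨h1, h2⟩ := hfeq
    have hgg : g = g' := by
      have : (a g * m g * z) * (z⁻¹ * b g) = (a g' * m g' * z') * (z'⁻¹ * b g') := by
        rw [h1, h2]
      have e1 : (a g * m g * z) * (z⁻¹ * b g) = g := by
        conv_rhs => rw [hg g]
        group
      have e2 : (a g' * m g' * z') * (z'⁻¹ * b g') = g' := by
        conv_rhs => rw [hg g']
        group
      rw [e1, e2] at this
      exact this
    subst hgg
    have hzz : z = z' := by
      exact mul_left_cancel h1
    simp [hzz]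
  have hcard : Nat.card ((AM ⊓ BM : Subgroup G) × G) ≤ Nat.card (AM × BM) :=
    Nat.card_le_card_of_injective f hinj
  rw [Nat.card_prod, Nat.card_prod, hG, hAMcard, hBMcard] at hcard
  -- so card (AM ⊓ BM) ≤ n * k
  have hle : Nat.card (AM ⊓ BM : Subgroup G) ≤ n * k := by
    have h2 : (n ^ 2 * k) * (n ^ 2 * k) = (n * k) * (n ^ 3 * k) := by ring
    rw [h2] at hcard
    have hpos : 0 < n ^ 3 * k := Nat.mul_pos (by positivity) hk0
    exact Nat.le_of_mul_le_mul_right hcard hpos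
  exact (Subgroup.eq_of_le_of_card_ge hMle (hM ▸ hle)).symm
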